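/- Let T ≥ 1 and let V be a T×T real symmetric positive-definite matrix. Consider the function 𝓛(A) := −(1/2) log det A − (1/2) tr(V A^{-1}) defined on the set of T×T real symmetric positive-definite matrices A. Then 𝓛 attains its unique global maximum at A = V: for every symmetric positive-definite A, 𝓛(A) ≤ 𝓛(V) = −(1/2) log det V − T/2, with equality if and only if A = V. -/

import Mathlib

open Matrix

noncomputable section

lemma trace_eq_sum_eig {n : Type*} [Fintype n] [DecidableEq n] {M : Matrix n n ℝ}
    (hM : M.IsHermitian) : M.trace = ∑ i, hM.eigenvalues i := by
  conv_lhs => rw [hM.spectral_theorem, Unitary.conjStarAlgAut_apply]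
  rw [Matrix.trace_mul_cycle]
  simp [Matrix.trace_diagonal, ← Matrix.mul_assoc,
    (Matrix.mem_unitaryGroup_iff'.mp hM.eigenvectorUnitary.2), Unitary.coe_star_mul_self]

lemma key_ineq {n : Type*} [Fintype n] [DecidableEq n] {M : Matrix n n ℝ}
    (hM : M.PosDef) :
    Real.log M.det + (Fintype.card n : ℝ) ≤ M.trace ∧
      (Real.log M.det + (Fintype.card n : ℝ) = M.trace ↔ M = 1) := by
  have hμ : ∀ i, 0 < hM.1.eigenvalues i := hM.eigenvalues_pos
  have hdet : M.det = ∏ i, hM.1.eigenvalues i := by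
    simpa using hM.1.det_eq_prod_eigenvalues
  have hlog : Real.log M.det = ∑ i, Real.log (hM.1.eigenvalues i) := by
    rw [hdet, Real.log_prod (fun i _ => (hμ i).ne')]
  have htr : M.trace = ∑ i, hM.1.eigenvalues i := trace_eq_sum_eig hM.1
  have hcard : (Fintype.card n : ℝ) = ∑ _i : n, (1 : ℝ) := by simp
  have hle : ∀ i, Real.log (hM.1.eigenvalues i) + 1 ≤ hM.1.eigenvalues i := by
    intro i
    have := Real.log_le_sub_one_of_pos (hμ i)
    linarith
  constructor
  · rw [hlog, htr, hcard, ← Finset.sum_add_distrib]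
    exact Finset.sum_le_sum fun i _ => hle i
  · constructor
    · intro heq
      have hall : ∀ i, hM.1.eigenvalues i = 1 := by
        by_contra hc
        push_neg at hc
        obtain ⟨j, hj⟩ := hc
        have hstrict : Real.log (hM.1.eigenvalues j) + 1 < hM.1.eigenvalues j := by
          have := Real.log_lt_sub_one_of_pos (hμ j) hj
          linarith
        have : ∑ i, (Real.log (hM.1.eigenvalues i) + 1) < ∑ i, hM.1.eigenvalues i :=
          Finset.sum_lt_sum (fun i _ => hle i) ⟨j, Finset.mem_univ j, hstrict⟩
        rw [hlog, htr, hcard, ← Finset.sum_add_distrib] at heq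
        linarith
      have : M = (hM.1.eigenvectorUnitary : Matrix n n ℝ) *
          diagonal (RCLike.ofReal ∘ hM.1.eigenvalues) *
          (star hM.1.eigenvectorUnitary : Matrix n n ℝ) := by
          have h := hM.1.spectral_theorem; rwa [Unitary.conjStarAlgAut_apply] at h
      rw [this]
      have hfun : (RCLike.ofReal ∘ hM.1.eigenvalues : n → ℝ) = fun _ => 1 :=
        funext fun i => by simp [hall i]
      rw [hfun, Matrix.diagonal_one, Matrix.mul_one]
      exact Matrix.mem_unitaryGroup_iff.mp hM.1.eigenvectorUnitary.2
    · rintro rfl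
      simp [Matrix.trace_one]

theorem statement8 (T : ℕ) (hT : 1 ≤ T)
    (V : Matrix (Fin T) (Fin T) ℝ) (hV : V.PosDef) :
    (-(1 / 2) * Real.log V.det - (1 / 2) * (V * V⁻¹).trace =
        -(1 / 2) * Real.log V.det - (T : ℝ) / 2) ∧
      ∀ A : Matrix (Fin T) (Fin T) ℝ, A.PosDef →
        (-(1 / 2) * Real.log A.det - (1 / 2) * (V * A⁻¹).trace ≤
            -(1 / 2) * Real.log V.det - (T : ℝ) / 2) ∧
          (-(1 / 2) * Real.log A.det - (1 / 2) * (V * A⁻¹).trace =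
              -(1 / 2) * Real.log V.det - (T : ℝ) / 2 ↔ A = V) := by
  have hVdet : V.det ≠ 0 := hV.det_pos.ne'
  obtain ⟨S, hS, hSS⟩ : ∃ S : Matrix (Fin T) (Fin T) ℝ, S.PosSemidef ∧ S * S = V := by
    open scoped MatrixOrder in
    exact ⟨CFC.sqrt V, (CFC.sqrt_nonneg V).posSemidef, CFC.sqrt_mul_sqrt_self V hV.posSemidef.nonneg⟩
  have hSsymm : Sᵀ = S := hS.isHermitian
  have hSdet : S.det ≠ 0 := by
    intro h
    have : V.det = 0 := by rw [← hSS, Matrix.det_mul, h, zero_mul]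
    exact hVdet this
  constructor
  · rw [Matrix.mul_nonsing_inv V hVdet.isUnit, Matrix.trace_one]
    simp
    ring
  intro A hA
  have hAdet : A.det ≠ 0 := hA.det_pos.ne'
  have hAinv : A⁻¹.PosDef := hA.inv
  -- M := S * A⁻¹ * S
  set M := S * A⁻¹ * S with hMdef
  have hSx : ∀ x : Fin T → ℝ, x ≠ 0 → S *ᵥ x ≠ 0 := by
    intro x hx h
    have hVx : V *ᵥ x = 0 := by
      rw [← hSS, ← Matrix.mulVec_mulVec, h, Matrix.mulVec_zero]
    have := hV.dotProduct_mulVec_pos hx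
    rw [hVx] at this
    simp at this
  have hM : M.PosDef := by
    refine Matrix.PosDef.of_dotProduct_mulVec_pos ?_ ?_
    · show Mᴴ = M
      rw [hMdef]
      simp only [Matrix.conjTranspose_mul, ← Matrix.mul_assoc]
      rw [hAinv.1]
      have : Sᴴ = S := hS.isHermitian
      rw [this]
    · intro x hx
      have : star x ⬝ᵥ (M *ᵥ x) = star (S *ᵥ x) ⬝ᵥ (A⁻¹ *ᵥ (S *ᵥ x)) := by
        rw [hMdef, ← Matrix.mulVec_mulVec, ← Matrix.mulVec_mulVec,
          Matrix.dotProduct_mulVec (star x) S]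
        congr 1
        show (star x) ᵥ* S = star (S *ᵥ x)
        have : star x = x := by simp
        rw [this]
        have : S *ᵥ x = x ᵥ* S := by rw [← Matrix.mulVec_transpose, hSsymm]
        rw [← this]
        simp
      rw [this]
      exact hAinv.dotProduct_mulVec_pos (hSx x hx)
  have hMtr : M.trace = (V * A⁻¹).trace := by
    rw [hMdef, Matrix.trace_mul_cycle, hSS]
  have hMdet : M.det = V.det * A.det⁻¹ := by
    rw [hMdef, Matrix.det_mul, Matrix.det_mul, Matrix.det_nonsing_inv, Ring.inverse_eq_inv]
    have h2 : S.det * S.det = V.det := by rw [← Matrix.det_mul, hSS]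
    linear_combination A.det⁻¹ * h2
  have hMlog : Real.log M.det = Real.log V.det - Real.log A.det := by
    rw [hMdet, Real.log_mul hVdet (inv_ne_zero hAdet), Real.log_inv]
    ring
  obtain ⟨hle, hiff⟩ := key_ineq hM
  rw [Fintype.card_fin, hMtr, hMlog] at hle hiff
  have hM1 : M = 1 ↔ A = V := by
    constructor
    · intro h1
      have : S * A⁻¹ * S = 1 := h1
      have hAinvEq : A⁻¹ = S⁻¹ * S⁻¹ := by
        have h2 : S⁻¹ * (S * A⁻¹ * S) * S⁻¹ = S⁻¹ * 1 * S⁻¹ := by rw [this]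
        rw [← Matrix.mul_assoc, ← Matrix.mul_assoc, Matrix.nonsing_inv_mul S hSdet.isUnit,
          Matrix.one_mul, Matrix.mul_assoc, Matrix.mul_nonsing_inv S hSdet.isUnit,
          Matrix.mul_one, Matrix.mul_one] at h2
        exact h2
      have : A⁻¹ = V⁻¹ := by
        rw [hAinvEq, ← Matrix.mul_inv_rev, hSS]
      calc A = A⁻¹⁻¹ := (Matrix.nonsing_inv_nonsing_inv A hAdet.isUnit).symm
        _ = V⁻¹⁻¹ := by rw [this]
        _ = V := Matrix.nonsing_inv_nonsing_inv V hVdet.isUnit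
    · rintro rfl
      show S * A⁻¹ * S = 1
      rw [← hSS, Matrix.mul_inv_rev, ← Matrix.mul_assoc,
        Matrix.mul_nonsing_inv S hSdet.isUnit, Matrix.one_mul,
        Matrix.nonsing_inv_mul S hSdet.isUnit]
  constructor
  · linarith
  · rw [← hM1, ← hiff]
    constructor <;> intro h <;> linarith

end
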